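/- For every positive integer k, b_2(K_{2k+1}) = k + 1. -/

import Mathlib

open Finset

/-- The number of bicliques in the collection `f` that cover the pair `(u, v)`. -/
noncomputable def coversCount {V : Type*} {m : ℕ} (f : Fin m → Finset V × Finset V) (u v : V) : ℕ :=
  Nat.card {i : Fin m // (u ∈ (f i).1 ∧ v ∈ (f i).2) ∨ (u ∈ (f i).2 ∧ v ∈ (f i).1)}

/-- `f` is an odd cover of `G`: a collection of bicliques (pairs of disjoint finite sets of
vertices) covering each edge of `G` an odd number of times and each nonedge an even number
of times. -/
def IsOddCover {V : Type*} (G : SimpleGraph V) {m : ℕ}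
    (f : Fin m → Finset V × Finset V) : Prop :=
  (∀ i, Disjoint (f i).1 (f i).2) ∧
  ∀ u v : V, u ≠ v → (G.Adj u v ↔ Odd (coversCount f u v))

/-- `b2 G` is the minimum cardinality of an odd cover of `G`. -/
noncomputable def b2 {V : Type*} (G : SimpleGraph V) : ℕ :=
  sInf {m : ℕ | ∃ f : Fin m → Finset V × Finset V, IsOddCover G f}

/-- `r2 G` is the rank over `𝔽₂` of the adjacency matrix of `G`. -/
noncomputable def r2 {V : Type*} [Fintype V] (G : SimpleGraph V) : ℕ :=
  letI := Classical.decRel G.Adj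
  (SimpleGraph.adjMatrix (ZMod 2) G).rank

/-- Disjoint union of an indexed family of graphs, on the sigma type of the vertex types. -/
def sigmaSum {ι : Type*} {α : ι → Type*} (G : (i : ι) → SimpleGraph (α i)) :
    SimpleGraph ((i : ι) × α i) where
  Adj x y := ∃ (i : ι) (a b : α i), (G i).Adj a b ∧ x = ⟨i, a⟩ ∧ y = ⟨i, b⟩
  symm := by constructor; rintro x y ⟨i, a, b, h, rfl, rfl⟩; exact ⟨i, b, a, h.symm, rfl, rfl⟩
  loopless := by
    constructor
    rintro x ⟨i, a, b, h, rfl, h2⟩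
    obtain ⟨-, h3⟩ := Sigma.mk.inj_iff.mp h2
    exact (G i).irrefl (by cases h3; exact h)




open Finset

namespace OddCov

def cl (a b : ℕ) : ZMod 2 := if (a = 1 ∧ b = 2) ∨ (a = 2 ∧ b = 1) then 1 else 0

lemma cl_comm (a b : ℕ) : cl a b = cl b a := by
  unfold cl
  exact if_congr (by tauto) rfl rfl

lemma cl_zero_left (b : ℕ) : cl 0 b = 0 := by simp [cl]

lemma cl_two_left (b : ℕ) : cl 2 b = if b = 1 then 1 else 0 := by
  unfold cl
  by_cases h : b = 1 <;> simp [h]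

def clash : ℕ → (ℕ → ℕ) → (ℕ → ℕ) → ZMod 2
  | 0, _, _ => 0
  | L+1, s, t => cl (s 0) (t 0) + clash L (fun i => s (i+1)) (fun i => t (i+1))

def xc : ℕ → (ℕ → ℕ) → ZMod 2
  | 0, _ => 0
  | L+1, s => (if s 0 = 1 then 1 else 0) + xc L (fun i => s (i+1))

lemma clash_comm (L : ℕ) (s t : ℕ → ℕ) : clash L s t = clash L t s := by
  induction L generalizing s t with
  | zero => rfl
  | succ n ih => simp only [clash, cl_comm, ih]

lemma clash_zero_left (L : ℕ) (t : ℕ → ℕ) : clash L (fun _ => 0) t = 0 := by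
  induction L generalizing t with
  | zero => rfl
  | succ n ih => simp only [clash, cl_zero_left, ih, add_zero, zero_add]

lemma clash_two_left (L : ℕ) (t : ℕ → ℕ) : clash L (fun _ => 2) t = xc L t := by
  induction L generalizing t with
  | zero => rfl
  | succ n ih => simp only [clash, xc, cl_two_left, ih]

lemma clash_eq_sum (L : ℕ) (s t : ℕ → ℕ) :
    clash L s t = ∑ i ∈ Finset.range L, cl (s i) (t i) := by
  induction L generalizing s t with
  | zero => rfl
  | succ n ih =>
    rw [Finset.sum_range_succ']
    simp only [clash, ih]
    ring

mutual
def Ar : ℕ → ℕ → ℕ → ℕ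
  | 0, _, _ => 0
  | m+1, j, i => if j = 0 then (if i = 0 then 1 else 0) else if i = 0 then 2 else Br m (j-1) (i-1)
def Br : ℕ → ℕ → ℕ → ℕ
  | 0, _, _ => 0
  | m+1, j, i => if j = m-1 then (if i = 0 then 1 else 2) else if i = 0 then 0 else Ar m j (i-1)
end

lemma Ar_tail_zero (m : ℕ) : (fun i => Ar (m+1) 0 (i+1)) = fun _ => 0 := by
  funext i; simp [Ar]

lemma Ar_head_zero (m : ℕ) : Ar (m+1) 0 0 = 1 := by simp [Ar]

lemma Ar_tail (m j : ℕ) (hj : j ≠ 0) : (fun i => Ar (m+1) j (i+1)) = Br m (j-1) := by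
  funext i; simp [Ar, hj]

lemma Ar_head (m j : ℕ) (hj : j ≠ 0) : Ar (m+1) j 0 = 2 := by simp [Ar, hj]

lemma Br_tail_top (m : ℕ) : (fun i => Br (m+2) m (i+1)) = fun _ => 2 := by
  funext i; simp [Br]

lemma Br_head_top (m : ℕ) : Br (m+2) m 0 = 1 := by simp [Br]

lemma Br_tail' (m j : ℕ) (hj : j ≠ m) : (fun i => Br (m+2) j (i+1)) = Ar (m+1) j := by
  funext i; simp [Br, hj]

lemma Br_head' (m j : ℕ) (hj : j ≠ m) : Br (m+2) j 0 = 0 := by simp [Br, hj]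

lemma xc_zero_str (L : ℕ) : xc L (fun _ => 0) = 0 := by
  induction L with
  | zero => rfl
  | succ n ih => simpa [xc] using ih

lemma xc_two_str (L : ℕ) : xc L (fun _ => 2) = 0 := by
  induction L with
  | zero => rfl
  | succ n ih => simpa [xc] using ih

lemma xcA0 (m : ℕ) : xc (m+1) (Ar (m+2) 0) = 1 := by
  simp only [xc, Ar_head_zero, Ar_tail_zero]
  rw [xc_zero_str, add_zero]
  simp

/-- Inv m: invariant at level m+1 (rows j < m, strings of length m) -/
def Inv (m : ℕ) : Prop :=
  (∀ j j', j < m → j' < m → j ≠ j' → clash m (Ar (m+1) j) (Ar (m+1) j') = 1) ∧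
  (∀ j j', j < m → j' < m → j ≠ j' → clash m (Br (m+1) j) (Br (m+1) j') = 1) ∧
  (∀ j j', j < m → j' < m → clash m (Ar (m+1) j) (Br (m+1) j') = 0) ∧
  (∀ j, j < m → xc m (Ar (m+1) j) = 1) ∧
  (∀ j, j < m → xc m (Br (m+1) j) = 1)

lemma inv_all (m : ℕ) : Inv m := by
  induction m with
  | zero =>
    refine ⟨?_, ?_, ?_, ?_, ?_⟩ <;> intro j <;> intros <;> omega
  | succ m ih =>
    obtain ⟨ihA, ihB, ihAB, ihxA, ihxB⟩ := ih
    refine ⟨?_, ?_, ?_, ?_, ?_⟩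
    · -- A internal
      intro j j' hj hj' hne
      rcases Nat.eq_zero_or_pos j with h0 | h0
      · subst h0
        have hj'0 : j' ≠ 0 := fun h => hne h.symm
        simp only [clash, Ar_head_zero, Ar_head _ _ hj'0, Ar_tail_zero, Ar_tail _ _ hj'0]
        rw [clash_zero_left]
        decide
      · rcases Nat.eq_zero_or_pos j' with h0' | h0'
        · subst h0'
          have hj0 : j ≠ 0 := by omega
          simp only [clash, Ar_head_zero, Ar_head _ _ hj0, Ar_tail_zero, Ar_tail _ _ hj0]
          rw [clash_comm, clash_zero_left]
          decide
        · have hj0 : j ≠ 0 := by omega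
          have hj0' : j' ≠ 0 := by omega
          simp only [clash, Ar_head _ _ hj0, Ar_head _ _ hj0', Ar_tail _ _ hj0, Ar_tail _ _ hj0']
          rw [ihB (j-1) (j'-1) (by omega) (by omega) (by omega)]
          decide
    · -- B internal
      intro j j' hj hj' hne
      rcases eq_or_ne j m with htop | htop
      · subst htop
        have h' : j' ≠ j := fun h => hne h.symm
        simp only [clash, Br_head_top, Br_head' _ _ h', Br_tail_top, Br_tail' _ _ h']
        rw [clash_two_left, ihxA j' (by omega)]
        decide
      · rcases eq_or_ne j' m with htop' | htop'
        · subst htop'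
          simp only [clash, Br_head_top, Br_head' _ _ htop, Br_tail_top, Br_tail' _ _ htop]
          rw [clash_comm, clash_two_left, ihxA j (by omega)]
          decide
        · simp only [clash, Br_head' _ _ htop, Br_head' _ _ htop', Br_tail' _ _ htop, Br_tail' _ _ htop']
          rw [ihA j j' (by omega) (by omega) hne]
          decide
    · -- A vs B even
      intro j j' hj hj'
      rcases Nat.eq_zero_or_pos j with h0 | h0
      · subst h0
        rcases eq_or_ne j' m with htop' | htop'
        · subst htop'
          simp only [clash, Ar_head_zero, Br_head_top, Ar_tail_zero, Br_tail_top]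
          rw [clash_zero_left]
          decide
        · simp only [clash, Ar_head_zero, Br_head' _ _ htop', Ar_tail_zero, Br_tail' _ _ htop']
          rw [clash_zero_left]
          decide
      · have hj0 : j ≠ 0 := by omega
        rcases eq_or_ne j' m with htop' | htop'
        · subst htop'
          simp only [clash, Ar_head _ _ hj0, Br_head_top, Ar_tail _ _ hj0, Br_tail_top]
          rw [clash_comm, clash_two_left, ihxB (j-1) (by omega)]
          decide
        · simp only [clash, Ar_head _ _ hj0, Br_head' _ _ htop', Ar_tail _ _ hj0, Br_tail' _ _ htop']
          rw [clash_comm, ihAB j' (j-1) (by omega) (by omega)]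
          decide
    · -- xc A
      intro j hj
      rcases Nat.eq_zero_or_pos j with h0 | h0
      · subst h0
        exact xcA0 m
      · have hj0 : j ≠ 0 := by omega
        simp only [xc, Ar_head _ _ hj0, Ar_tail _ _ hj0]
        rw [ihxB (j-1) (by omega)]
        decide
    · -- xc B
      intro j hj
      rcases eq_or_ne j m with htop | htop
      · subst htop
        simp only [xc, Br_head_top, Br_tail_top]
        rw [xc_two_str]
        decide
      · simp only [xc, Br_head' _ _ htop, Br_tail' _ _ htop]
        rw [ihxA j (by omega)]
        decide

end OddCov

namespace OddCov2
open OddCov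

/-- the full string system at level m+1: 2m+1 strings of length m+1 -/
def Sv (m u i : ℕ) : ℕ :=
  if u = 0 then (if i = 0 then 0 else 2)
  else if u < m+1 then (if i = 0 then 1 else Ar (m+1) (u-1) (i-1))
  else (if i = 0 then 2 else Br (m+1) (u-(m+1)) (i-1))

lemma Sv_head0 (m : ℕ) : Sv m 0 0 = 0 := by simp [Sv]
lemma Sv_tail0 (m : ℕ) : (fun i => Sv m 0 (i+1)) = fun _ => 2 := by funext i; simp [Sv]
lemma Sv_headX (m u : ℕ) (h0 : u ≠ 0) (h1 : u < m+1) : Sv m u 0 = 1 := by simp [Sv, h0, h1]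
lemma Sv_tailX (m u : ℕ) (h0 : u ≠ 0) (h1 : u < m+1) :
    (fun i => Sv m u (i+1)) = Ar (m+1) (u-1) := by funext i; simp [Sv, h0, h1]
lemma Sv_headY (m u : ℕ) (h1 : ¬ u < m+1) : Sv m u 0 = 2 := by
  have h0 : u ≠ 0 := by omega
  simp [Sv, h0, h1]
lemma Sv_tailY (m u : ℕ) (h1 : ¬ u < m+1) :
    (fun i => Sv m u (i+1)) = Br (m+1) (u-(m+1)) := by
  have h0 : u ≠ 0 := by omega
  funext i; simp [Sv, h0, h1]

theorem Sv_pairwise (m u u' : ℕ) (hu : u < 2*m+1) (hu' : u' < 2*m+1) (hne : u ≠ u') :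
    clash (m+1) (Sv m u) (Sv m u') = 1 := by
  obtain ⟨hA, hB, hAB, hxA, hxB⟩ := inv_all m
  -- helper: 0 vs X
  have zeroX : ∀ v, v ≠ 0 → v < m+1 → clash (m+1) (Sv m 0) (Sv m v) = 1 := by
    intro v h0 h1
    simp only [clash, Sv_head0, Sv_tail0, Sv_headX m v h0 h1, Sv_tailX m v h0 h1]
    rw [clash_two_left, hxA (v-1) (by omega)]
    decide
  have zeroY : ∀ v, ¬ v < m+1 → v < 2*m+1 → clash (m+1) (Sv m 0) (Sv m v) = 1 := by
    intro v h1 h2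
    simp only [clash, Sv_head0, Sv_tail0, Sv_headY m v h1, Sv_tailY m v h1]
    rw [clash_two_left, hxB (v-(m+1)) (by omega)]
    decide
  have XY : ∀ v w, v ≠ 0 → v < m+1 → ¬ w < m+1 → w < 2*m+1 →
      clash (m+1) (Sv m v) (Sv m w) = 1 := by
    intro v w h0 h1 g1 g2
    simp only [clash, Sv_headX m v h0 h1, Sv_tailX m v h0 h1, Sv_headY m w g1, Sv_tailY m w g1]
    rw [hAB (v-1) (w-(m+1)) (by omega) (by omega)]
    decide
  rcases Nat.eq_zero_or_pos u with hu0 | hu0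
  · subst hu0
    rcases Nat.lt_or_ge u' (m+1) with h1 | h1
    · exact zeroX u' (fun h => hne h.symm) h1
    · exact zeroY u' (by omega) hu'
  · rcases Nat.eq_zero_or_pos u' with hu'0 | hu'0
    · subst hu'0
      rw [clash_comm]
      rcases Nat.lt_or_ge u (m+1) with h1 | h1
      · exact zeroX u (by omega) h1
      · exact zeroY u (by omega) hu
    · rcases Nat.lt_or_ge u (m+1) with h1 | h1 <;> rcases Nat.lt_or_ge u' (m+1) with h1' | h1'
      · -- X X
        simp only [clash, Sv_headX m u (by omega) h1, Sv_tailX m u (by omega) h1,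
          Sv_headX m u' (by omega) h1', Sv_tailX m u' (by omega) h1']
        rw [hA (u-1) (u'-1) (by omega) (by omega) (by omega)]
        decide
      · exact XY u u' (by omega) h1 (by omega) hu'
      · rw [clash_comm]; exact XY u' u (by omega) h1' (by omega) hu
      · -- Y Y
        simp only [clash, Sv_headY m u (by omega), Sv_tailY m u (by omega),
          Sv_headY m u' (by omega), Sv_tailY m u' (by omega)]
        rw [hB (u-(m+1)) (u'-(m+1)) (by omega) (by omega) (by omega)]
        decide

end OddCov2


namespace OddCov3

lemma coversCount_cast {V : Type*} [DecidableEq V] {M : ℕ} (f : Fin M → Finset V × Finset V)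
    (hdisj : ∀ i, Disjoint (f i).1 (f i).2) (u v : V) :
    ((coversCount f u v : ℕ) : ZMod 2) =
      ∑ i : Fin M, ((if u ∈ (f i).1 then (1:ZMod 2) else 0) * (if v ∈ (f i).2 then 1 else 0)
        + (if u ∈ (f i).2 then (1:ZMod 2) else 0) * (if v ∈ (f i).1 then 1 else 0)) := by
  unfold coversCount
  rw [Nat.card_eq_fintype_card, Fintype.card_subtype, Finset.card_filter]
  push_cast
  refine Finset.sum_congr rfl (fun i _ => ?_)
  by_cases h1 : u ∈ (f i).1 <;> by_cases h3 : u ∈ (f i).2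
  · exact absurd h3 (Finset.disjoint_left.mp (hdisj i) h1)
  all_goals by_cases h2 : v ∈ (f i).2 <;> by_cases h4 : v ∈ (f i).1 <;>
    simp [h1, h3, h2, h4]

end OddCov3

namespace OddCov4
open OddCov OddCov2 OddCov3

lemma cl_eq_prod (a b : ℕ) :
    (if a = 1 then (1:ZMod 2) else 0) * (if b = 2 then 1 else 0)
      + (if a = 2 then (1:ZMod 2) else 0) * (if b = 1 then 1 else 0) = cl a b := by
  unfold cl
  by_cases ha1 : a = 1 <;> by_cases ha2 : a = 2 <;>
    by_cases hb1 : b = 1 <;> by_cases hb2 : b = 2 <;>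
    simp_all

def bic (k : ℕ) : Fin (k+1) → Finset (Fin (2*k+1)) × Finset (Fin (2*k+1)) :=
  fun i => (Finset.univ.filter (fun u : Fin (2*k+1) => Sv k u.val i.val = 1),
            Finset.univ.filter (fun u : Fin (2*k+1) => Sv k u.val i.val = 2))

lemma bic_disj (k : ℕ) : ∀ i, Disjoint ((bic k) i).1 ((bic k) i).2 := by
  intro i
  rw [Finset.disjoint_left]
  intro a ha hb
  simp only [bic, Finset.mem_filter] at ha hb
  omega

lemma bic_isOddCover (k : ℕ) : IsOddCover (⊤ : SimpleGraph (Fin (2*k+1))) (bic k) := by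
  refine ⟨bic_disj k, ?_⟩
  intro u v huv
  rw [SimpleGraph.top_adj]
  refine iff_of_true huv ?_
  rw [← ZMod.natCast_eq_one_iff_odd, coversCount_cast (bic k) (bic_disj k) u v]
  have hterm : ∀ i : Fin (k+1),
      ((if u ∈ ((bic k) i).1 then (1:ZMod 2) else 0) * (if v ∈ ((bic k) i).2 then 1 else 0)
        + (if u ∈ ((bic k) i).2 then (1:ZMod 2) else 0) * (if v ∈ ((bic k) i).1 then 1 else 0))
      = cl (Sv k u.val i.val) (Sv k v.val i.val) := by
    intro i
    rw [← cl_eq_prod]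
    simp [bic]
  rw [Finset.sum_congr rfl (fun i _ => hterm i)]
  rw [Fin.sum_univ_eq_sum_range (fun j => cl (Sv k u.val j) (Sv k v.val j)) (k+1)]
  rw [← clash_eq_sum]
  exact Sv_pairwise k u.val v.val u.isLt v.isLt (fun h => huv (Fin.val_injective h))

end OddCov4

namespace OddCov5
open OddCov OddCov2 OddCov3

def padded {V : Type*} {M : ℕ} (k : ℕ) (f : Fin M → Finset V × Finset V) :
    Fin k → Finset V × Finset V :=
  fun i => if h : (i : ℕ) < M then f ⟨i, h⟩ else (∅, ∅)

lemma padded_disj {V : Type*} {M : ℕ} (k : ℕ) (f : Fin M → Finset V × Finset V)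
    (hdisj : ∀ i, Disjoint (f i).1 (f i).2) : ∀ i, Disjoint ((padded k f) i).1 ((padded k f) i).2 := by
  intro i
  unfold padded
  split
  · exact hdisj _
  · simp

lemma padded_sum {V : Type*} [DecidableEq V] {M : ℕ} (k : ℕ) (hMk : M ≤ k)
    (f : Fin M → Finset V × Finset V) (hdisj : ∀ i, Disjoint (f i).1 (f i).2) (u v : V) :
    ((coversCount (padded k f) u v : ℕ) : ZMod 2) = ((coversCount f u v : ℕ) : ZMod 2) := by
  rw [coversCount_cast f hdisj, coversCount_cast (padded k f) (padded_disj k f hdisj)]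
  set T : ℕ → ZMod 2 := fun j =>
    if h : j < M then ((if u ∈ (f ⟨j,h⟩).1 then (1:ZMod 2) else 0) * (if v ∈ (f ⟨j,h⟩).2 then 1 else 0)
        + (if u ∈ (f ⟨j,h⟩).2 then (1:ZMod 2) else 0) * (if v ∈ (f ⟨j,h⟩).1 then 1 else 0))
    else 0 with hT
  have hleft : ∀ i : Fin k,
      ((if u ∈ ((padded k f) i).1 then (1:ZMod 2) else 0) * (if v ∈ ((padded k f) i).2 then 1 else 0)
        + (if u ∈ ((padded k f) i).2 then (1:ZMod 2) else 0) * (if v ∈ ((padded k f) i).1 then 1 else 0))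
      = T (i : ℕ) := by
    intro i
    simp only [hT]
    unfold padded
    by_cases h : (i : ℕ) < M
    · simp only [dif_pos h]
    · simp only [dif_neg h]
      simp
  have hright : ∀ i : Fin M,
      ((if u ∈ (f i).1 then (1:ZMod 2) else 0) * (if v ∈ (f i).2 then 1 else 0)
        + (if u ∈ (f i).2 then (1:ZMod 2) else 0) * (if v ∈ (f i).1 then 1 else 0))
      = T (i : ℕ) := by
    intro i
    simp only [hT]
    rw [dif_pos i.isLt]
  rw [Finset.sum_congr rfl (fun i _ => hleft i), Finset.sum_congr rfl (fun i _ => hright i)]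
  rw [Fin.sum_univ_eq_sum_range T k, Fin.sum_univ_eq_sum_range T M]
  rw [← Finset.sum_subset (Finset.range_subset_range.mpr hMk) ?_]
  intro j _ hj
  rw [Finset.mem_range] at hj
  simp only [hT]
  rw [dif_neg hj]

theorem lower_bound (k : ℕ) (hk : 1 ≤ k) {M : ℕ}
    (f : Fin M → Finset (Fin (2*k+1)) × Finset (Fin (2*k+1)))
    (hf : IsOddCover (⊤ : SimpleGraph (Fin (2*k+1))) f) : k + 1 ≤ M := by
  by_contra hcon
  push_neg at hcon
  have hMk : M ≤ k := by omega
  set g := padded k f with hg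
  have hgdisj := padded_disj k f hf.1
  -- the two matrices
  set U : Matrix (Fin (2*k+1)) (Option (Fin k × Bool)) (ZMod 2) :=
    Matrix.of (fun u c => match c with
      | none => 1
      | some (i, false) => if u ∈ (g i).1 then 1 else 0
      | some (i, true) => if u ∈ (g i).2 then 1 else 0) with hU
  set W : Matrix (Fin (2*k+1)) (Option (Fin k × Bool)) (ZMod 2) :=
    Matrix.of (fun u c => match c with
      | none => 1
      | some (i, false) => if u ∈ (g i).2 then 1 else 0
      | some (i, true) => if u ∈ (g i).1 then 1 else 0) with hW
  have key : ∀ u v : Fin (2*k+1),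
      (∑ c : Option (Fin k × Bool), U u c * W v c) = if u = v then 1 else 0 := by
    intro u v
    rw [Fintype.sum_option, Fintype.sum_prod_type]
    have hbool : ∀ i : Fin k, (∑ b : Bool, U u (some (i,b)) * W v (some (i,b)))
        = ((if u ∈ (g i).1 then (1:ZMod 2) else 0) * (if v ∈ (g i).2 then 1 else 0)
        + (if u ∈ (g i).2 then (1:ZMod 2) else 0) * (if v ∈ (g i).1 then 1 else 0)) := by
      intro i
      rw [Fintype.sum_bool, hU, hW]
      show (if u ∈ (g i).2 then (1:ZMod 2) else 0) * (if v ∈ (g i).1 then 1 else 0)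
          + (if u ∈ (g i).1 then (1:ZMod 2) else 0) * (if v ∈ (g i).2 then 1 else 0) = _
      ring
    rw [Finset.sum_congr rfl (fun i _ => hbool i)]
    by_cases huv : u = v
    · subst huv
      rw [if_pos rfl]
      have hz : ∀ i : Fin k,
          ((if u ∈ (g i).1 then (1:ZMod 2) else 0) * (if u ∈ (g i).2 then 1 else 0)
          + (if u ∈ (g i).2 then (1:ZMod 2) else 0) * (if u ∈ (g i).1 then 1 else 0)) = 0 := by
        intro i
        rw [mul_comm ((if u ∈ (g i).2 then (1:ZMod 2) else 0))]
        rw [CharTwo.add_self_eq_zero]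
      rw [Finset.sum_congr rfl (fun i _ => hz i), Finset.sum_const_zero, add_zero]
      show (1 : ZMod 2) * 1 = 1
      rw [one_mul]
    · rw [if_neg huv]
      have hodd : Odd (coversCount f u v) :=
        (hf.2 u v huv).mp ((SimpleGraph.top_adj u v).mpr huv)
      have hone : ((coversCount g u v : ℕ) : ZMod 2) = 1 := by
        rw [hg, padded_sum k hMk f hf.1]
        exact ZMod.natCast_eq_one_iff_odd.mpr hodd
      rw [coversCount_cast g hgdisj] at hone
      rw [hone]
      show (1 : ZMod 2) * 1 + 1 = 0
      decide
  have hcard : Fintype.card (Option (Fin k × Bool)) = 2*k+1 := by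
    simp only [Fintype.card_option, Fintype.card_prod, Fintype.card_fin, Fintype.card_bool]
    omega
  set e : Option (Fin k × Bool) ≃ Fin (2*k+1) := Fintype.equivFinOfCardEq hcard with he
  set U' : Matrix (Fin (2*k+1)) (Fin (2*k+1)) (ZMod 2) :=
    Matrix.of (fun u j => U u (e.symm j)) with hU'
  set W' : Matrix (Fin (2*k+1)) (Fin (2*k+1)) (ZMod 2) :=
    Matrix.of (fun u j => W u (e.symm j)) with hW'
  have hUW : U' * W'.transpose = 1 := by
    ext u v
    rw [Matrix.mul_apply]
    have : ∀ j, U' u j * W'.transpose j v = (fun c => U u c * W v c) (e.symm j) := by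
      intro j
      rw [Matrix.transpose_apply, hU', hW']
      rfl
    rw [Finset.sum_congr rfl (fun j _ => this j)]
    rw [Equiv.sum_comp e.symm (fun c => U u c * W v c)]
    rw [key u v, Matrix.one_apply]
  have hWU : W'.transpose * U' = 1 := mul_eq_one_comm.mp hUW
  have i0 : Fin k := ⟨0, hk⟩
  set j0 : Fin (2*k+1) := e (some (i0, false)) with hj0
  have h1 : (W'.transpose * U') j0 j0 = 1 := by rw [hWU, Matrix.one_apply_eq]
  rw [Matrix.mul_apply] at h1
  have hz : ∀ u : Fin (2*k+1), W'.transpose j0 u * U' u j0 = 0 := by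
    intro u
    rw [Matrix.transpose_apply, hU', hW', hj0]
    show W u (e.symm (e (some (i0, false)))) * U u (e.symm (e (some (i0, false)))) = 0
    rw [Equiv.symm_apply_apply]
    show (if u ∈ (g i0).2 then (1:ZMod 2) else 0) * (if u ∈ (g i0).1 then 1 else 0) = 0
    by_cases h2 : u ∈ (g i0).2
    · have h3 : u ∉ (g i0).1 := fun hx => (Finset.disjoint_left.mp (hgdisj i0) hx h2)
      rw [if_neg h3, mul_zero]
    · rw [if_neg h2, zero_mul]
  rw [Finset.sum_congr rfl (fun u _ => hz u), Finset.sum_const_zero] at h1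
  exact absurd h1 (by decide)

end OddCov5

/-- For every positive integer `k`, `b₂(K_{2k+1}) = k + 1`. -/
theorem stmt9 (k : ℕ) (hk : 1 ≤ k) :
    b2 (⊤ : SimpleGraph (Fin (2 * k + 1))) = k + 1 := by
  have hup : (k+1) ∈ {m : ℕ | ∃ f : Fin m → Finset (Fin (2*k+1)) × Finset (Fin (2*k+1)),
      IsOddCover (⊤ : SimpleGraph (Fin (2*k+1))) f} :=
    ⟨OddCov4.bic k, OddCov4.bic_isOddCover k⟩
  have hne : Set.Nonempty {m : ℕ | ∃ f : Fin m → Finset (Fin (2*k+1)) × Finset (Fin (2*k+1)),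
      IsOddCover (⊤ : SimpleGraph (Fin (2*k+1))) f} := ⟨k+1, hup⟩
  refine le_antisymm (Nat.sInf_le hup) ?_
  obtain ⟨f, hf⟩ := Nat.sInf_mem hne
  exact OddCov5.lower_bound k hk f hf
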